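/- Let A, B be complex algebras with A unital. A linear map φ : A → B is an n-homomorphism if and only if there exist mutually orthogonal algebra homomorphisms ψ₁, …, ψ_{n−1} : A → B such that φ(a) = Σ_{k=1}^{n−1} ω_k ψ_k(a) for all a, where ω_k = exp(2πi(k−1)/(n−1)). -/

import Mathlib

/-- Product of a nonempty list: `nuProd x [a₁, …, aₘ] = x * a₁ * ⋯ * aₘ`. -/
def nuProd {α : Type*} [Mul α] (x : α) (l : List α) : α := l.foldl (· * ·) x

/-- `epow e j = e^(j+1)` in a non-unital setting. -/
def epow {B : Type*} [Mul B] (e : B) : ℕ → B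
  | 0 => e
  | j+1 => epow e j * e

section Helpers
variable {B : Type*} [NonUnitalRing B] (e : B)

lemma epow_succ (j : ℕ) : epow e (j+1) = epow e j * e := rfl

lemma epow_succ' (j : ℕ) : epow e (j+1) = e * epow e j := by
  induction j with
  | zero => rfl
  | succ j ih => rw [epow_succ, ih, mul_assoc, ← epow_succ, ih]

lemma epow_mul_epow (j l : ℕ) : epow e j * epow e l = epow e (j + l + 1) := by
  induction l with
  | zero => rfl
  | succ l ih => rw [epow_succ, ← mul_assoc, ih]; rfl

lemma foldl_rep (j : ℕ) (y : B) :
    List.foldl (· * ·) (y * e) (List.replicate j e) = y * epow e j := by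
  induction j generalizing y with
  | zero => rfl
  | succ j ih =>
      rw [List.replicate_succ, List.foldl_cons]
      show List.foldl (· * ·) (y * e * e) (List.replicate j e) = _
      rw [ih (y * e), mul_assoc, ← epow_succ']

lemma foldl_rep0 (j : ℕ) :
    List.foldl (· * ·) e (List.replicate j e) = epow e j := by
  cases j with
  | zero => rfl
  | succ j => rw [List.replicate_succ, List.foldl_cons]
              show List.foldl (· * ·) (e * e) (List.replicate j e) = _
              rw [foldl_rep e j e, ← epow_succ']

end Helpers

lemma ofFn_ite {α : Type*} (m q : ℕ) (hq : q < m) (a b : α) :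
    (List.ofFn fun i : Fin m => if (i : ℕ) = q then a else b) =
      List.replicate q b ++ a :: List.replicate (m - 1 - q) b := by
  apply List.ext_getElem
  · simp; omega
  · intro i h1 h2
    simp only [List.getElem_ofFn]
    rcases lt_trichotomy i q with h | h | h
    · rw [List.getElem_append_left (by simpa using h), List.getElem_replicate]
      simp; omega
    · subst h
      rw [List.getElem_append_right (by simp)]
      simp
    · rw [List.getElem_append_right (by simp; omega)]
      have : i - q ≠ 0 := by omega
      rcases Nat.exists_eq_succ_of_ne_zero this with ⟨t, ht⟩
      simp only [List.length_replicate, ht, List.getElem_cons_succ, List.getElem_replicate]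
      rw [if_neg (by omega)]

lemma backward_aux {A B : Type*}
    [Ring A] [Algebra ℂ A]
    [NonUnitalRing B] [Module ℂ B] [SMulCommClass ℂ B B] [IsScalarTower ℂ B B]
    (m : ℕ) (hm : 1 ≤ m) (φ : A →ₗ[ℂ] B)
    (ψ : Fin m → (A →ₙₐ[ℂ] B))
    (horth : ∀ i j, i ≠ j → ∀ a b : A, ψ i a * ψ j b = 0 ∧ ψ j b * ψ i a = 0)
    (hsum : ∀ a : A, φ a = ∑ k : Fin m,
      Complex.exp (2 * Real.pi * Complex.I * ((k : ℕ) : ℂ) / ((m : ℕ) : ℂ)) • ψ k a) :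
    ∀ (x : A) (f : Fin m → A),
      φ (x * (List.ofFn f).prod) = nuProd (φ x) (List.ofFn fun i => φ (f i)) := by
  have hm0 : (m : ℂ) ≠ 0 := Nat.cast_ne_zero.mpr (by omega)
  set ζ : ℂ := Complex.exp (2 * Real.pi * Complex.I / m) with hζdef
  have hco : ∀ k : ℕ, Complex.exp (2 * Real.pi * Complex.I * (k : ℂ) / (m : ℂ)) = ζ ^ k := by
    intro k
    rw [hζdef, ← Complex.exp_nat_mul]
    ring_nf
  have hζm : ζ ^ m = 1 := by
    rw [hζdef, ← Complex.exp_nat_mul]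
    rw [show (m : ℂ) * (2 * Real.pi * Complex.I / m) = 2 * Real.pi * Complex.I by
      field_simp]
    exact Complex.exp_two_pi_mul_I
  have hsum' : ∀ a : A, φ a = ∑ k : Fin m, ζ ^ (k : ℕ) • ψ k a := by
    intro a; rw [hsum a]; exact Finset.sum_congr rfl fun k _ => by rw [hco]
  have hcross : ∀ (c d : Fin m → ℂ) (y a : A),
      (∑ k : Fin m, c k • ψ k y) * (∑ l : Fin m, d l • ψ l a) =
        ∑ k : Fin m, (c k * d k) • ψ k (y * a) := by
    intro c d y a
    rw [Finset.sum_mul_sum]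
    refine Finset.sum_congr rfl fun k _ => ?_
    rw [Finset.sum_eq_single k]
    · rw [smul_mul_smul_comm, ← map_mul]
    · intro l _ hlk
      rw [smul_mul_smul_comm, (horth k l (Ne.symm hlk) y a).1, smul_zero]
    · simp
  have key : ∀ (l : List A) (c : Fin m → ℂ) (y : A),
      List.foldl (· * ·) (∑ k : Fin m, c k • ψ k y) (l.map φ) =
        ∑ k : Fin m, (c k * ζ ^ ((k : ℕ) * l.length)) • ψ k (y * l.prod) := by
    intro l
    induction l with
    | nil => intro c y; simp
    | cons a t ih =>
        intro c y
        rw [List.map_cons, List.foldl_cons]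
        show List.foldl (· * ·) ((∑ k : Fin m, c k • ψ k y) * φ a) (t.map φ) = _
        rw [hsum' a, hcross, ih (fun k => c k * ζ ^ (k : ℕ)) (y * a)]
        refine Finset.sum_congr rfl fun k _ => ?_
        rw [mul_assoc, ← pow_add, mul_assoc]
        congr 2
        simp [List.length_cons]
        ring
  intro x f
  have h1 : (List.ofFn fun i => φ (f i)) = (List.ofFn f).map φ := (List.map_ofFn (f := f) (g := φ)).symm
  rw [h1, hsum' x]
  show _ = List.foldl (· * ·) (∑ k : Fin m, ζ ^ (k : ℕ) • ψ k x) ((List.ofFn f).map φ)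
  rw [key (List.ofFn f) (fun k => ζ ^ (k : ℕ)) x, hsum' (x * (List.ofFn f).prod)]
  refine Finset.sum_congr rfl fun k _ => ?_
  rw [List.length_ofFn, ← pow_add]
  congr 1
  rw [show (k : ℕ) + (k : ℕ) * m = (k : ℕ) + m * (k : ℕ) by ring, pow_add, pow_mul, hζm,
    one_pow, mul_one]

lemma forward_aux {A B : Type*}
    [Ring A] [Algebra ℂ A]
    [NonUnitalRing B] [Module ℂ B] [SMulCommClass ℂ B B] [IsScalarTower ℂ B B]
    (m : ℕ) (hm : 2 ≤ m) (φ : A →ₗ[ℂ] B)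
    (h : ∀ (x : A) (f : Fin m → A),
      φ (x * (List.ofFn f).prod) = nuProd (φ x) (List.ofFn fun i => φ (f i))) :
    ∃ ψ : Fin m → (A →ₙₐ[ℂ] B),
      (∀ i j, i ≠ j → ∀ a b : A, ψ i a * ψ j b = 0 ∧ ψ j b * ψ i a = 0) ∧
      (∀ a : A, φ a = ∑ k : Fin m,
        Complex.exp (2 * Real.pi * Complex.I * ((k : ℕ) : ℂ) / ((m : ℕ) : ℂ)) • ψ k a) := by
  have hm0 : (m : ℂ) ≠ 0 := Nat.cast_ne_zero.mpr (by omega)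
  set e : B := φ 1 with hedef
  -- position instances
  have hPOS : ∀ (q : ℕ), q < m → ∀ (x a : A), φ (x * a) =
      List.foldl (· * ·) (φ x)
        (List.replicate q e ++ φ a :: List.replicate (m - 1 - q) e) := by
    intro q hq x a
    have hh := h x (fun i => if (i : ℕ) = q then a else 1)
    rw [ofFn_ite m q hq] at hh
    rw [show (List.ofFn fun i : Fin m => φ (if (i : ℕ) = q then a else 1)) =
        List.replicate q e ++ φ a :: List.replicate (m - 1 - q) e from by
      rw [show (fun i : Fin m => φ (if (i : ℕ) = q then a else 1)) =
          (fun i : Fin m => if (i : ℕ) = q then φ a else e) from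
        funext fun i => apply_ite φ _ _ _, ofFn_ite m q hq (φ a) e]] at hh
    rw [List.prod_append, List.prod_cons, List.prod_replicate, List.prod_replicate,
      one_pow, one_pow, one_mul, mul_one] at hh
    exact hh
  have hK3 : ∀ x a : A, φ (x * a) = φ x * φ a * epow e (m - 2) := by
    intro x a
    have hh := hPOS 0 (by omega) x a
    rw [show m - 1 - 0 = (m - 2) + 1 by omega] at hh
    rw [List.replicate_zero, List.nil_append, List.replicate_succ, List.foldl_cons,
      List.foldl_cons] at hh
    rw [hh]
    exact foldl_rep e (m-2) (φ x * φ a)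
  have hK4 : ∀ x a : A, φ (x * a) = φ x * epow e (m - 2) * φ a := by
    intro x a
    have hh := hPOS (m - 1) (by omega) x a
    rw [show m - 1 - (m - 1) = 0 by omega, show m - 1 = (m - 2) + 1 by omega] at hh
    rw [List.replicate_zero, List.replicate_succ, List.cons_append, List.foldl_cons,
      List.foldl_append] at hh
    rw [show (List.foldl (· * ·) (φ x * e) (List.replicate (m-2) e)) = φ x * epow e (m-2)
      from foldl_rep e (m-2) (φ x)] at hh
    simpa using hh
  have hG4 : ∀ a : A, φ a = epow e (m - 1) * φ a := by
    intro a
    have hh := hK4 1 a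
    rw [one_mul] at hh
    conv_lhs => rw [hh]
    show e * epow e (m - 2) * φ a = _
    rw [← epow_succ', show (m - 2) + 1 = m - 1 by omega]
  have hG5 : ∀ a : A, φ a = epow e (m - 2) * φ a * e := by
    intro a
    have hh := hPOS (m - 2) (by omega) 1 a
    rw [show m - 1 - (m - 2) = 1 by omega, one_mul] at hh
    rw [List.foldl_append] at hh
    rw [show List.foldl (· * ·) (φ 1) (List.replicate (m-2) e) = epow e (m-2) from
      foldl_rep0 e (m-2)] at hh
    simpa using hh
  have hcyc : epow e m = e := by
    have hh := hG5 1
    rw [← hedef] at hh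
    rw [show epow e (m - 2) * e = epow e (m - 1) from by
      rw [← epow_succ]; congr 1; omega] at hh
    rw [show epow e (m - 1) * e = epow e m from by
      rw [← epow_succ]; congr 1; omega] at hh
    exact hh.symm
  have hcomm : ∀ a : A, e * φ a = φ a * e := by
    intro a
    conv_lhs => rw [hG5 a]
    rw [← mul_assoc, ← mul_assoc, ← epow_succ', show (m-2)+1 = m-1 by omega, ← hG4 a]
  have hcomme : ∀ (j : ℕ) (a : A), epow e j * φ a = φ a * epow e j := by
    intro j a
    induction j with
    | zero => exact hcomm a
    | succ j ih =>
        rw [epow_succ, mul_assoc, hcomm a, ← mul_assoc, ih, mul_assoc]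
  have hred : ∀ j, epow e (j + m) = epow e j := by
    intro j
    induction j with
    | zero => simpa [epow] using hcyc
    | succ j ih => rw [show j + 1 + m = (j + m) + 1 by omega, epow_succ, ih, epow_succ]
  have hφe : ∀ x : A, φ x * epow e (m - 1) = φ x := fun x => by
    rw [← hcomme, ← hG4]
  set ζ : ℂ := Complex.exp (2 * Real.pi * Complex.I / m) with hζdef
  have hζ0 : ζ ≠ 0 := Complex.exp_ne_zero _
  have hprim : IsPrimitiveRoot ζ m := Complex.isPrimitiveRoot_exp m (by omega)
  have hζm : ζ ^ (m : ℕ) = 1 := hprim.pow_eq_one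
  have hζd : ∀ t : ℤ, (m : ℤ) ∣ t → ζ ^ t = 1 := fun t ht =>
    (hprim.zpow_eq_one_iff_dvd t).mpr ht
  have hgeom : ∀ t : ℤ, ¬ (m : ℤ) ∣ t → ∑ j ∈ Finset.range m, (ζ ^ t) ^ j = 0 := by
    intro t ht
    have hne1 : ζ ^ t ≠ 1 := fun hone => ht ((hprim.zpow_eq_one_iff_dvd t).mp hone)
    rw [geom_sum_eq hne1 m]
    rw [show (ζ ^ t) ^ m = (ζ ^ (m : ℕ)) ^ t from by
      rw [← zpow_natCast (ζ ^ t) m, ← zpow_mul, mul_comm, zpow_mul, zpow_natCast]]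
    rw [hζm, one_zpow, sub_self, zero_div]
  set P : Fin m → B := fun k =>
    (m : ℂ)⁻¹ • ∑ j ∈ Finset.range m, ζ ^ (-(((k : ℕ) * (j + 1) : ℕ) : ℤ)) • epow e j
    with hPdef
  have hP1 : ∀ k : Fin m, e * P k = ζ ^ ((k : ℕ) : ℤ) • P k := by
    intro k
    simp only [hPdef]
    rw [mul_smul_comm, smul_comm ((ζ : ℂ) ^ (((k : ℕ) : ℤ))) ((m : ℂ)⁻¹)]
    congr 1
    rw [Finset.mul_sum, Finset.smul_sum]
    simp only [mul_smul_comm, smul_smul, ← epow_succ']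
    rw [show Finset.range m = Finset.range ((m - 1) + 1) from by
      rw [Nat.sub_add_cancel (by omega)]]
    rw [Finset.sum_range_succ, Finset.sum_range_succ']
    congr 1
    · apply Finset.sum_congr rfl
      intro j hj
      congr 1
      rw [← zpow_add₀ hζ0]
      congr 1
      push_cast; ring
    · rw [show (m - 1) + 1 = m by omega, hcyc]
      rw [show (-(((k : ℕ) * m : ℕ) : ℤ)) = (m : ℤ) * (-(k : ℕ)) from by push_cast; ring]
      rw [hζd ((m : ℤ) * (-((k:ℕ):ℤ))) ⟨-((k:ℕ):ℤ), rfl⟩]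
      rw [show ζ ^ (((k:ℕ):ℤ)) * ζ ^ (-(((k : ℕ) * (0 + 1) : ℕ) : ℤ)) = 1 from by
        rw [← zpow_add₀ hζ0, show ((k:ℕ):ℤ) + -(((k : ℕ) * (0 + 1) : ℕ) : ℤ) = 0 from by
          push_cast; ring, zpow_zero]]
      rfl
  have hP2 : ∀ (k : Fin m) (j : ℕ),
      epow e j * P k = ζ ^ (((k : ℕ) * (j + 1) : ℕ) : ℤ) • P k := by
    intro k j
    induction j with
    | zero => simpa [epow] using hP1 k
    | succ j ih =>
        rw [epow_succ', mul_assoc, ih, mul_smul_comm, hP1 k, smul_smul, ← zpow_add₀ hζ0]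
        rw [show (((k : ℕ) * (j + 1) : ℕ) : ℤ) + ((k : ℕ) : ℤ)
            = (((k : ℕ) * (j + 1 + 1) : ℕ) : ℤ) from by push_cast; ring]
  have hPe : ∀ (k : Fin m) (j : ℕ), P k * epow e j = epow e j * P k := by
    intro k j
    simp only [hPdef]
    rw [smul_mul_assoc, mul_smul_comm, Finset.sum_mul, Finset.mul_sum]
    congr 1
    apply Finset.sum_congr rfl
    intro l _
    rw [smul_mul_assoc, mul_smul_comm, epow_mul_epow, epow_mul_epow,
      show l + j + 1 = j + l + 1 by omega]
  have hPφ : ∀ (k : Fin m) (a : A), P k * φ a = φ a * P k := by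
    intro k a
    simp only [hPdef]
    rw [smul_mul_assoc, mul_smul_comm, Finset.sum_mul, Finset.mul_sum]
    congr 1
    apply Finset.sum_congr rfl
    intro l _
    rw [smul_mul_assoc, mul_smul_comm, hcomme]
  have hnd : ∀ k l : Fin m, k ≠ l → ¬ (m : ℤ) ∣ (((k : ℕ) : ℤ) - ((l : ℕ) : ℤ)) := by
    intro k l hkl hdvd
    obtain ⟨s, hs⟩ := hdvd
    have hk : (k : ℕ) < m := k.2
    have hl : (l : ℕ) < m := l.2
    have hne : (k : ℕ) ≠ (l : ℕ) := fun hh => hkl (Fin.ext hh)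
    have hkz : ((k : ℕ) : ℤ) < m := by exact_mod_cast hk
    have hlz : ((l : ℕ) : ℤ) < m := by exact_mod_cast hl
    have hk0 : (0 : ℤ) ≤ ((k : ℕ) : ℤ) := Int.natCast_nonneg _
    have hl0 : (0 : ℤ) ≤ ((l : ℕ) : ℤ) := Int.natCast_nonneg _
    have hmz : (0 : ℤ) < m := by exact_mod_cast (by omega : 0 < m)
    rcases lt_trichotomy s 0 with hs0 | hs0 | hs0
    · have h1 : s ≤ -1 := by omega
      have h2 : (m : ℤ) * s ≤ (m : ℤ) * (-1) := by
        exact mul_le_mul_of_nonneg_left h1 (le_of_lt hmz)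
      linarith
    · rw [hs0, mul_zero] at hs
      have : ((k : ℕ) : ℤ) = ((l : ℕ) : ℤ) := by linarith
      exact hne (by exact_mod_cast this)
    · have h1 : (1 : ℤ) ≤ s := by omega
      have h2 : (m : ℤ) * 1 ≤ (m : ℤ) * s := by
        exact mul_le_mul_of_nonneg_left h1 (le_of_lt hmz)
      linarith
  have hP3 : ∀ k l : Fin m, P k * P l = if k = l then P k else 0 := by
    intro k l
    have hPl : P l = (m : ℂ)⁻¹ • ∑ j ∈ Finset.range m,
        ζ ^ (-(((l : ℕ) * (j + 1) : ℕ) : ℤ)) • epow e j := by rw [hPdef]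
    have expand : P k * P l =
        ((m : ℂ)⁻¹ * ∑ j ∈ Finset.range m,
          (ζ ^ ((((k : ℕ) : ℤ)) - ((l : ℕ) : ℤ))) ^ (j + 1)) • P k := by
      conv_lhs => rw [hPl]
      rw [mul_smul_comm, Finset.mul_sum, mul_smul]
      congr 1
      rw [Finset.sum_smul]
      apply Finset.sum_congr rfl
      intro j _
      rw [mul_smul_comm, hPe, hP2, smul_smul, ← zpow_add₀ hζ0,
        ← zpow_natCast (ζ ^ ((((k : ℕ) : ℤ)) - ((l : ℕ) : ℤ))) (j + 1), ← zpow_mul]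
      congr 1
      push_cast; ring
    rw [expand]
    by_cases hkl : k = l
    · subst hkl
      rw [if_pos rfl]
      rw [show (((k : ℕ) : ℤ)) - ((k : ℕ) : ℤ) = 0 by ring, zpow_zero]
      simp only [one_pow, Finset.sum_const, Finset.card_range, nsmul_eq_mul, mul_one]
      rw [inv_mul_cancel₀ hm0, one_smul]
    · rw [if_neg hkl]
      have hz : ∑ j ∈ Finset.range m,
          (ζ ^ ((((k : ℕ) : ℤ)) - ((l : ℕ) : ℤ))) ^ (j + 1) = 0 := by
        have := hgeom _ (hnd k l hkl)
        calc ∑ j ∈ Finset.range m, (ζ ^ ((((k : ℕ) : ℤ)) - ((l : ℕ) : ℤ))) ^ (j + 1)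
            = (∑ j ∈ Finset.range m, (ζ ^ ((((k : ℕ) : ℤ)) - ((l : ℕ) : ℤ))) ^ j) *
              (ζ ^ ((((k : ℕ) : ℤ)) - ((l : ℕ) : ℤ))) := by
              rw [Finset.sum_mul]
              exact Finset.sum_congr rfl fun j _ => (pow_succ _ _)
          _ = 0 := by rw [this, zero_mul]
      rw [hz, mul_zero, zero_smul]
  have hP4 : ∑ k : Fin m, ζ ^ ((k : ℕ) : ℤ) • P k = e := by
    have step : ∀ k : Fin m, ζ ^ ((k : ℕ) : ℤ) • P k =
        (m : ℂ)⁻¹ • ∑ j ∈ Finset.range m, ((ζ ^ (-(j : ℤ))) ^ ((k : ℕ))) • epow e j := by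
      intro k
      simp only [hPdef]
      rw [smul_comm]
      congr 1
      rw [Finset.smul_sum]
      apply Finset.sum_congr rfl
      intro j _
      rw [smul_smul, ← zpow_add₀ hζ0, ← zpow_natCast (ζ ^ (-(j : ℤ))) ((k : ℕ)), ← zpow_mul]
      congr 1
      push_cast; ring
    rw [Finset.sum_congr rfl fun k _ => step k, ← Finset.smul_sum]
    rw [show (∑ k : Fin m, ∑ j ∈ Finset.range m, ((ζ ^ (-(j : ℤ))) ^ ((k : ℕ))) • epow e j)
        = ∑ j ∈ Finset.range m, (∑ k ∈ Finset.range m, (ζ ^ (-(j : ℤ))) ^ k) • epow e j from by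
      rw [Finset.sum_comm]
      apply Finset.sum_congr rfl
      intro j _
      rw [Finset.sum_smul, Fin.sum_univ_eq_sum_range (fun k => ((ζ ^ (-(j : ℤ))) ^ k • epow e j)) m]]
    rw [Finset.sum_eq_single 0 (fun j hj hj0 => by
      have hjlt : j < m := Finset.mem_range.mp hj
      have hnd0 : ¬ (m : ℤ) ∣ (-(j : ℤ)) := by
        rw [Int.dvd_neg]
        intro hd
        have : (m : ℕ) ∣ j := Int.natCast_dvd_natCast.mp hd
        have := Nat.le_of_dvd (by omega) this
        omega
      rw [hgeom _ hnd0, zero_smul])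
      (fun habs => absurd (Finset.mem_range.mpr (by omega : 0 < m)) habs)]
    simp only [Nat.cast_zero, neg_zero, zpow_zero, one_pow, Finset.sum_const, Finset.card_range,
      nsmul_eq_mul, mul_one]
    show (m : ℂ)⁻¹ • ((m : ℂ) • e) = e
    rw [smul_smul, inv_mul_cancel₀ hm0, one_smul]
  -- the quasi-homomorphism R
  set R : A → B := fun a => epow e (m - 2) * φ a with hRdef
  have hcomm2 : ∀ (j : ℕ) (a b : A), φ a * φ b * epow e j = epow e j * (φ a * φ b) := by
    intro j a b
    rw [mul_assoc, ← hcomme j b, ← mul_assoc, ← hcomme j a, mul_assoc]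
  have hRmul : ∀ a b : A, R (a * b) = R a * R b := by
    intro a b
    show epow e (m - 2) * φ (a * b) = (epow e (m - 2) * φ a) * (epow e (m - 2) * φ b)
    rw [hK3 a b, hcomm2, ← mul_assoc]
    rw [show (epow e (m - 2) * φ a) * (epow e (m - 2) * φ b)
        = (epow e (m - 2) * epow e (m - 2)) * (φ a * φ b) from by
      rw [mul_assoc, ← mul_assoc (φ a), ← hcomme (m - 2) a, mul_assoc, ← mul_assoc]]
  have hRP : ∀ (k : Fin m) (a : A), P k * R a = R a * P k := by
    intro k a
    show P k * (epow e (m - 2) * φ a) = (epow e (m - 2) * φ a) * P k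
    rw [← mul_assoc, hPe, mul_assoc, hPφ, ← mul_assoc]
  have hmix : ∀ (i j : Fin m) (a b : A),
      (P i * R a) * (P j * R b) = (P i * P j) * (R a * R b) := by
    intro i j a b
    rw [mul_assoc (P i) (R a) (P j * R b), ← mul_assoc (R a) (P j) (R b), ← hRP j a,
      mul_assoc (P j) (R a) (R b), ← mul_assoc (P i) (P j) (R a * R b)]
  -- the homomorphisms
  refine ⟨fun k =>
    { toFun := fun a => P k * R a
      map_add' := by
        intro a b
        show P k * R (a + b) = P k * R a + P k * R b
        rw [show R (a + b) = R a + R b from by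
          show epow e (m-2) * φ (a+b) = _
          rw [map_add, mul_add], mul_add]
      map_smul' := by
        intro c a
        show P k * R (c • a) = c • (P k * R a)
        rw [show R (c • a) = c • R a from by
          show epow e (m-2) * φ (c • a) = _
          rw [map_smul, mul_smul_comm], mul_smul_comm]
      map_zero' := by
        show P k * R 0 = 0
        rw [show R 0 = 0 from by
          show epow e (m-2) * φ 0 = 0
          rw [map_zero, mul_zero], mul_zero]
      map_mul' := by
        intro a b
        show P k * R (a * b) = (P k * R a) * (P k * R b)
        rw [hmix, hP3, if_pos rfl, hRmul] }, ?_, ?_⟩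
  · intro i j hij a b
    constructor
    · show (P i * R a) * (P j * R b) = 0
      rw [hmix, hP3, if_neg hij, zero_mul]
    · show (P j * R b) * (P i * R a) = 0
      rw [hmix, hP3, if_neg (Ne.symm hij), zero_mul]
  · intro a
    have hco : ∀ k : ℕ, Complex.exp (2 * Real.pi * Complex.I * (k : ℂ) / (m : ℂ))
        = ζ ^ ((k : ℕ) : ℤ) := by
      intro k
      rw [zpow_natCast, hζdef, ← Complex.exp_nat_mul]
      ring_nf
    show φ a = ∑ k : Fin m,
      Complex.exp (2 * Real.pi * Complex.I * ((k : ℕ) : ℂ) / ((m : ℕ) : ℂ)) • (P k * R a)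
    calc φ a = epow e (m - 1) * φ a := hG4 a
      _ = (∑ k : Fin m, ζ ^ ((k : ℕ) : ℤ) • P k) * R a := by
          rw [hP4]
          show epow e (m - 1) * φ a = e * (epow e (m - 2) * φ a)
          rw [← mul_assoc, ← epow_succ', show (m - 2) + 1 = m - 1 by omega]
      _ = ∑ k : Fin m, ζ ^ ((k : ℕ) : ℤ) • (P k * R a) := by
          rw [Finset.sum_mul]
          exact Finset.sum_congr rfl fun k _ => smul_mul_assoc _ _ _
      _ = _ := Finset.sum_congr rfl fun k _ => by rw [hco]

/-- For `A` a unital complex algebra, a linear map `φ : A → B` is an `n`-homomorphism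
iff there are mutually orthogonal algebra homomorphisms `ψ₁, …, ψ_{n-1}` with
`φ(a) = Σ_{k=1}^{n-1} ω_k ψ_k(a)`, where `ω_k = exp(2πi(k-1)/(n-1))`. -/
theorem nhom_iff_orthogonal_decomposition {A B : Type*}
    [Ring A] [Algebra ℂ A]
    [NonUnitalRing B] [Module ℂ B] [SMulCommClass ℂ B B] [IsScalarTower ℂ B B]
    (n : ℕ) (hn : 2 ≤ n) (φ : A →ₗ[ℂ] B) :
    (∀ (x : A) (f : Fin (n - 1) → A),
      φ (x * (List.ofFn f).prod) = nuProd (φ x) (List.ofFn fun i => φ (f i))) ↔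
    (∃ ψ : Fin (n - 1) → (A →ₙₐ[ℂ] B),
      (∀ i j, i ≠ j → ∀ a b : A, ψ i a * ψ j b = 0 ∧ ψ j b * ψ i a = 0) ∧
      (∀ a : A, φ a = ∑ k : Fin (n - 1),
        Complex.exp (2 * Real.pi * Complex.I * ((k : ℕ) : ℂ) / (((n - 1 : ℕ) : ℂ)))
          • ψ k a)) := by
  constructor
  · intro h
    rcases Nat.lt_or_ge (n - 1) 2 with h1 | h2
    · -- the case n = 2 : φ is a homomorphism
      have hm1 : n - 1 = 1 := by omega
      have hmul : ∀ x a : A, φ (x * a) = φ x * φ a := by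
        intro x a
        have hh := h x (fun _ => a)
        simp only [List.ofFn_const] at hh
        rw [hm1] at hh
        simpa [nuProd] using hh
      refine ⟨fun _ =>
        { toFun := fun a => φ a
          map_add' := map_add φ
          map_smul' := map_smul φ
          map_zero' := map_zero φ
          map_mul' := fun a b => hmul a b }, ?_, ?_⟩
      · intro i j hij a b
        exfalso
        apply hij
        have hi := i.2
        have hj := j.2
        exact Fin.ext (by omega)
      · intro a
        have huniv : (Finset.univ : Finset (Fin (n - 1))) = {⟨0, by omega⟩} := by
          apply Finset.eq_singleton_iff_unique_mem.mpr
          refine ⟨Finset.mem_univ _, fun x _ => Fin.ext ?_⟩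
          have := x.2
          omega
        rw [huniv, Finset.sum_singleton]
        simp
    · exact forward_aux (n - 1) h2 φ h
  · rintro ⟨ψ, horth, hsum⟩
    exact backward_aux (n - 1) (by omega) φ ψ horth hsum
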